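/- Quadrilateral Fact: let S ⊆ ℝ² be a set, not contained in any affine line, that contains its circle centers, and suppose S contains an entire nondegenerate line segment (there exist points A ≠ B with {(1−t)A + tB : t ∈ [0,1]} ⊆ S). Then S contains an entire quadrilateral together with its interior: there exist four points of ℝ², not all on one line, whose convex hull has nonempty interior and is contained in S. -/

import Mathlib

open Real EuclideanGeometry
open scoped RealInnerProductSpace

private lemma sq_le_self' {d : ℝ} (h0 : 0 < d) (h4 : d ≤ 1/4) : d^2 ≤ d := by nlinarith

private lemma quarter_le_sq {m : ℝ} (hm : 1/4 ≤ m) : 1/16 ≤ m^2 := by nlinarith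

private lemma sq_bounds {β b δ e : ℝ} (hbβ : β ≤ b) (hbβ' : -b ≤ β)
    (he1 : -δ ≤ e) (he2 : e ≤ δ) :
    β^2 - 2*b*δ ≤ (β+e)^2 ∧ (β+e)^2 ≤ β^2 + 2*b*δ + δ^2 := by
  constructor
  · nlinarith [mul_nonneg (by linarith : (0:ℝ) ≤ b + β) (by linarith : (0:ℝ) ≤ δ + e),
      mul_nonneg (by linarith : (0:ℝ) ≤ b - β) (by linarith : (0:ℝ) ≤ δ - e), sq_nonneg e]
  · nlinarith [mul_nonneg (by linarith : (0:ℝ) ≤ b + β) (by linarith : (0:ℝ) ≤ δ - e),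
      mul_nonneg (by linarith : (0:ℝ) ≤ b - β) (by linarith : (0:ℝ) ≤ δ + e), sq_nonneg e]

private lemma eq_of_sq_eq' {a b : ℝ} (ha : 0 ≤ a) (hb : 0 ≤ b) (h : a^2 = b^2) : a = b := by
  rw [← Real.sqrt_sq ha, ← Real.sqrt_sq hb, h]

/-- A set in the Euclidean plane contains its circle centers if, whenever it contains
three non-collinear points, it contains the point equidistant from all three
(the circumcenter of the triangle they form). -/
def ContainsCircleCenters (S : Set (EuclideanSpace ℝ (Fin 2))) : Prop :=
  ∀ A ∈ S, ∀ B ∈ S, ∀ C ∈ S,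
    ¬ Collinear ℝ ({A, B, C} : Set (EuclideanSpace ℝ (Fin 2))) →
    ∀ O : EuclideanSpace ℝ (Fin 2),
      dist O A = dist O B → dist O A = dist O C → O ∈ S

set_option maxHeartbeats 2000000 in
/-- Quadrilateral Fact: a circle-center set containing a nondegenerate line segment
contains an entire quadrilateral together with its interior. -/
theorem quadrilateral_fact (S : Set (EuclideanSpace ℝ (Fin 2)))
    (hline : ¬ Collinear ℝ S) (hcc : ContainsCircleCenters S)
    (A B : EuclideanSpace ℝ (Fin 2)) (hAB : A ≠ B) (hseg : segment ℝ A B ⊆ S) :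
    ∃ p₁ p₂ p₃ p₄ : EuclideanSpace ℝ (Fin 2),
      ¬ Collinear ℝ ({p₁, p₂, p₃, p₄} : Set (EuclideanSpace ℝ (Fin 2))) ∧
      (interior (convexHull ℝ ({p₁, p₂, p₃, p₄} : Set (EuclideanSpace ℝ (Fin 2))))).Nonempty ∧
      convexHull ℝ ({p₁, p₂, p₃, p₄} : Set (EuclideanSpace ℝ (Fin 2))) ⊆ S := by
  classical
  have hA : A ∈ S := hseg (left_mem_segment ℝ A B)
  have hB : B ∈ S := hseg (right_mem_segment ℝ A B)
  set v : EuclideanSpace ℝ (Fin 2) := B - A with hv_def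
  clear_value v
  have hv : v ≠ 0 := by rw [hv_def]; exact sub_ne_zero.mpr (Ne.symm hAB)
  -- choose a point C off the line AB
  obtain ⟨C, hC, hCcol⟩ : ∃ C ∈ S, ¬ Collinear ℝ ({A, B, C} : Set (EuclideanSpace ℝ (Fin 2))) := by
    by_contra hcon
    push_neg at hcon
    apply hline
    rw [collinear_iff_of_mem hA]
    refine ⟨v, fun p hp => ?_⟩
    obtain ⟨d, hd⟩ := (collinear_iff_of_mem
      (show A ∈ ({A, B, p} : Set (EuclideanSpace ℝ (Fin 2))) by simp)).mp (hcon p hp)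
    obtain ⟨rB, hrB⟩ := hd B (by simp)
    obtain ⟨rp, hrp⟩ := hd p (by simp)
    have hrB' : rB • d = v := by
      rw [hv_def, hrB]; simp [vadd_eq_add]
    have hrBne : rB ≠ 0 := by
      intro h0; rw [h0, zero_smul] at hrB'; exact hv hrB'.symm
    refine ⟨rp / rB, ?_⟩
    have hcoef : (rp / rB) • v = rp • d := by
      rw [← hrB', smul_smul, div_mul_cancel₀ _ hrBne]
    rw [hrp, vadd_eq_add, vadd_eq_add, hcoef]
  -- orthogonal decomposition of C - A
  set V : ℝ := ‖v‖^2 with hV_def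
  clear_value V
  have hV : (0:ℝ) < V := by rw [hV_def]; exact pow_pos (norm_pos_iff.mpr hv) 2
  have hVi : ⟪v, v⟫ = V := by rw [hV_def]; exact real_inner_self_eq_norm_sq v
  set α : ℝ := ⟪C - A, v⟫ / V with hα_def
  clear_value α
  set w : EuclideanSpace ℝ (Fin 2) := C - A - α • v with hw_def
  clear_value w
  have hwv : ⟪w, v⟫ = 0 := by
    rw [hw_def, inner_sub_left, real_inner_smul_left, hVi, hα_def,
      div_mul_cancel₀ _ (ne_of_gt hV), sub_self]
  have hvw : ⟪v, w⟫ = 0 := by rw [real_inner_comm]; exact hwv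
  have hCw : C = A + α • v + w := by rw [hw_def]; abel
  have hw : w ≠ 0 := by
    intro h0
    apply hCcol
    rw [collinear_iff_of_mem (show A ∈ ({A, B, C} : Set (EuclideanSpace ℝ (Fin 2))) by simp)]
    refine ⟨v, fun p hp => ?_⟩
    rcases hp with rfl | rfl | rfl
    · exact ⟨0, by simp⟩
    · exact ⟨1, by rw [one_smul, vadd_eq_add, hv_def]; abel⟩
    · refine ⟨α, ?_⟩
      rw [hCw, h0, vadd_eq_add]; abel
  set W : ℝ := ‖w‖^2 with hW_def
  clear_value W
  have hW : (0:ℝ) < W := by rw [hW_def]; exact pow_pos (norm_pos_iff.mpr hw) 2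
  -- independence of v and w
  have hindep : ∀ a b : ℝ, a • v = b • w → a = 0 ∧ b = 0 := by
    intro a b hab
    have h1 : ⟪a • v, v⟫ = ⟪b • w, v⟫ := by rw [hab]
    rw [real_inner_smul_left, real_inner_smul_left, hVi, hwv, mul_zero] at h1
    have ha : a = 0 := by
      rcases mul_eq_zero.mp h1 with h | h
      · exact h
      · exact absurd h (ne_of_gt hV)
    refine ⟨ha, ?_⟩
    rw [ha, zero_smul] at hab
    rcases smul_eq_zero.mp hab.symm with h | h
    · exact h
    · exact absurd h hw
  -- norm formula
  have hnorm : ∀ a b : ℝ, ‖a • v + b • w‖^2 = a^2 * V + b^2 * W := by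
    intro a b
    rw [norm_add_sq_real, norm_smul, norm_smul, real_inner_smul_left, real_inner_smul_right, hvw]
    rw [hV_def, hW_def]
    simp [mul_pow]
  -- noncollinearity of two distinct points on the line with C
  have hncol : ∀ p q : ℝ, p ≠ q →
      ¬ Collinear ℝ ({A + p • v, A + q • v, C} : Set (EuclideanSpace ℝ (Fin 2))) := by
    intro p q hpq hcol
    obtain ⟨d, hd⟩ := (collinear_iff_of_mem
      (show A + p • v ∈ ({A + p • v, A + q • v, C} : Set (EuclideanSpace ℝ (Fin 2))) by simp)).mp hcol
    obtain ⟨r₁, hr₁⟩ := hd (A + q • v) (by simp)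
    obtain ⟨r₂, hr₂⟩ := hd C (by simp)
    rw [vadd_eq_add] at hr₁ hr₂
    have h1 : r₁ • d = (q - p) • v := by
      have h' : r₁ • d = (A + q • v) - (A + p • v) := by rw [hr₁]; abel
      rw [h', sub_smul]; abel
    have h2 : r₂ • d = (α - p) • v + w := by
      have h' : r₂ • d = C - (A + p • v) := by rw [hr₂]; abel
      rw [h', hCw, sub_smul]; abel
    have hr₁ne : r₁ ≠ 0 := by
      intro h0
      rw [h0, zero_smul] at h1
      rcases smul_eq_zero.mp h1.symm with h | h
      · exact hpq (by linarith [sub_eq_zero.mp h])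
      · exact hv h
    have hdval : d = (r₁⁻¹ * (q - p)) • v := by
      rw [mul_smul, ← h1, smul_smul, inv_mul_cancel₀ hr₁ne, one_smul]
    have hwval : (r₂ * (r₁⁻¹ * (q - p)) - (α - p)) • v = (1:ℝ) • w := by
      rw [sub_smul, one_smul]
      rw [hdval, smul_smul] at h2
      rw [h2]; abel
    exact one_ne_zero (hindep _ _ hwval).2
  -- numeric setup
  set β : ℝ := 1/2 - α with hβ_def
  set b : ℝ := |β| with hb_def
  clear_value β b
  have hbβ : β ≤ b := by rw [hb_def]; exact le_abs_self β
  have hbβ' : -b ≤ β := by rw [hb_def]; exact neg_abs_le β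
  have hb0 : 0 ≤ b := by linarith
  set δ : ℝ := min (1/4) (1/(128*(4*b+1))) with hδ_def
  clear_value δ
  have hδ0 : 0 < δ := by
    rw [hδ_def]
    apply lt_min (by norm_num)
    apply div_pos one_pos
    linarith
  have hδ4 : δ ≤ 1/4 := by rw [hδ_def]; exact min_le_left _ _
  have hδb : δ * (4*b+1) ≤ 1/128 := by
    have h1 : δ ≤ 1/(128*(4*b+1)) := by rw [hδ_def]; exact min_le_right _ _
    have h2 : (0:ℝ) < 4*b+1 := by linarith
    calc δ * (4*b+1) ≤ (1/(128*(4*b+1))) * (4*b+1) :=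
          mul_le_mul_of_nonneg_right h1 (le_of_lt h2)
      _ = 1/128 := by field_simp
  set m : ℝ := 1/2 - δ with hm_def
  clear_value m
  have hm4 : 1/4 ≤ m := by rw [hm_def]; linarith
  have hm0 : 0 ≤ m := by linarith
  set fLo : ℝ := β^2 - 2*b*δ with hfLo_def
  set fHi : ℝ := β^2 + 2*b*δ + δ^2 with hfHi_def
  set c₀ : ℝ := m^2/4 - fLo with hc₀_def
  set c₁ : ℝ := m^2/2 - fHi with hc₁_def
  clear_value fLo fHi c₀ c₁
  have hc01 : c₀ < c₁ := by
    rw [hc₀_def, hc₁_def, hfLo_def, hfHi_def]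
    have h1 : δ^2 ≤ δ := sq_le_self' hδ0 hδ4
    have h2 : 1/16 ≤ m^2 := quarter_le_sq hm4
    linarith
  set K : ℝ := W / V with hK_def
  clear_value K
  have hK : 0 < K := by rw [hK_def]; exact div_pos hW hV
  set t₀ : ℝ := (1 - c₁/K)/2 with ht₀_def
  set t₁ : ℝ := (1 - c₀/K)/2 with ht₁_def
  clear_value t₀ t₁
  have ht01 : t₀ < t₁ := by
    rw [ht₀_def, ht₁_def]
    have h : c₀ / K < c₁ / K := by
      rw [div_eq_mul_inv, div_eq_mul_inv]
      exact mul_lt_mul_of_pos_right hc01 (inv_pos.mpr hK)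
    linarith
  set s₀ : ℝ := 1/2 - δ with hs₀_def
  set s₁ : ℝ := 1/2 + δ with hs₁_def
  clear_value s₀ s₁
  have hs01 : s₀ < s₁ := by rw [hs₀_def, hs₁_def]; linarith
  -- the key membership claim
  have hmem : ∀ s t : ℝ, s₀ ≤ s → s ≤ s₁ → t₀ ≤ t → t ≤ t₁ →
      A + s • v + t • w ∈ S := by
    intro s t hs0 hs1 ht0 ht1
    rw [hs₀_def] at hs0
    rw [hs₁_def] at hs1
    have hfs : fLo ≤ (s - α)^2 ∧ (s - α)^2 ≤ fHi := by
      have he : s - α = β + (s - 1/2) := by rw [hβ_def]; ring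
      have hsb := sq_bounds hbβ hbβ' (by linarith : -δ ≤ s - 1/2) (by linarith : s - 1/2 ≤ δ)
      rw [hfLo_def, hfHi_def, he]
      exact hsb
    set c : ℝ := (1 - 2*t) * K with hc_def
    clear_value c
    have hcK0 : c₀ ≤ c := by
      have h1 : c₀ / K ≤ 1 - 2*t := by rw [ht₁_def] at ht1; linarith
      calc c₀ = (c₀ / K) * K := (div_mul_cancel₀ c₀ (ne_of_gt hK)).symm
        _ ≤ (1 - 2*t) * K := mul_le_mul_of_nonneg_right h1 (le_of_lt hK)
        _ = c := hc_def.symm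
    have hcK1 : c ≤ c₁ := by
      have h1 : 1 - 2*t ≤ c₁ / K := by rw [ht₀_def] at ht0; linarith
      calc c = (1 - 2*t) * K := hc_def
        _ ≤ (c₁ / K) * K := mul_le_mul_of_nonneg_right h1 (le_of_lt hK)
        _ = c₁ := div_mul_cancel₀ c₁ (ne_of_gt hK)
    set r2 : ℝ := (s - α)^2 + c with hr2_def
    clear_value r2
    have hr2lo : m^2/4 ≤ r2 := by rw [hr2_def]; rw [hc₀_def] at hcK0; linarith [hfs.1]
    have hr2hi : r2 ≤ m^2/2 := by rw [hr2_def]; rw [hc₁_def] at hcK1; linarith [hfs.2]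
    have hr2pos : 0 < r2 := by
      have hm2 : (0:ℝ) < m^2 := pow_pos (by linarith) 2
      linarith
    set ρ : ℝ := Real.sqrt r2 with hρ_def
    clear_value ρ
    have hρ2 : ρ^2 = r2 := by rw [hρ_def]; exact Real.sq_sqrt (le_of_lt hr2pos)
    have hρpos : 0 < ρ := by rw [hρ_def]; exact Real.sqrt_pos.mpr hr2pos
    have hρm : ρ ≤ m := by
      rw [hρ_def, ← Real.sqrt_sq hm0]
      exact Real.sqrt_le_sqrt (by linarith [sq_nonneg m])
    rw [hm_def] at hρm
    set p : ℝ := s - ρ with hp_def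
    set q : ℝ := s + ρ with hq_def
    clear_value p q
    have hp01 : p ∈ Set.Icc (0:ℝ) 1 := by
      rw [hp_def]; constructor <;> [linarith; linarith]
    have hq01 : q ∈ Set.Icc (0:ℝ) 1 := by
      rw [hq_def]; constructor <;> [linarith; linarith]
    have hP : A + p • v ∈ S := by
      apply hseg
      rw [segment_eq_image']
      exact ⟨p, hp01, by rw [← hv_def]⟩
    have hQ : A + q • v ∈ S := by
      apply hseg
      rw [segment_eq_image']
      exact ⟨q, hq01, by rw [← hv_def]⟩
    have hpq : p ≠ q := by rw [hp_def, hq_def]; intro h; linarith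
    set O : EuclideanSpace ℝ (Fin 2) := A + s • v + t • w with hO_def
    have hOP : O - (A + p • v) = ρ • v + t • w := by
      rw [hO_def, hp_def, sub_smul]; abel
    have hOQ : O - (A + q • v) = (-ρ) • v + t • w := by
      rw [hO_def, hq_def, add_smul, neg_smul]; abel
    have hOC : O - C = (s - α) • v + (t - 1) • w := by
      rw [hO_def, hCw, sub_smul, sub_smul, one_smul]; abel
    have hd1 : dist O (A + p • v) = dist O (A + q • v) := by
      rw [dist_eq_norm, dist_eq_norm, hOP, hOQ]
      apply eq_of_sq_eq' (norm_nonneg _) (norm_nonneg _)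
      rw [hnorm, hnorm]; ring
    have hd2 : dist O (A + p • v) = dist O C := by
      rw [dist_eq_norm, dist_eq_norm, hOP, hOC]
      apply eq_of_sq_eq' (norm_nonneg _) (norm_nonneg _)
      rw [hnorm, hnorm]
      have hcV : c * V = (1 - 2*t) * W := by
        rw [hc_def, hK_def]
        field_simp
      have hρ2' : ρ^2 = (s - α)^2 + c := by rw [hρ2, hr2_def]
      linear_combination V * hρ2' + hcV
    exact hcc (A + p • v) hP (A + q • v) hQ C hC (hncol p q hpq) O hd1 hd2
  -- the quadrilateral
  set P₁ : EuclideanSpace ℝ (Fin 2) := A + s₀ • v + t₀ • w with hP₁_def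
  set P₂ : EuclideanSpace ℝ (Fin 2) := A + s₁ • v + t₀ • w with hP₂_def
  set P₃ : EuclideanSpace ℝ (Fin 2) := A + s₀ • v + t₁ • w with hP₃_def
  set P₄ : EuclideanSpace ℝ (Fin 2) := A + s₁ • v + t₁ • w with hP₄_def
  clear_value P₁ P₂ P₃ P₄
  set R : Set (EuclideanSpace ℝ (Fin 2)) :=
    {x | ∃ s t : ℝ, s₀ ≤ s ∧ s ≤ s₁ ∧ t₀ ≤ t ∧ t ≤ t₁ ∧ x = A + s • v + t • w} with hR_def
  have hRS : R ⊆ S := by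
    rintro x ⟨s, t, h1, h2, h3, h4, rfl⟩
    exact hmem s t h1 h2 h3 h4
  have hRconv : Convex ℝ R := by
    rintro x ⟨s, t, hs1, hs2, ht1, ht2, rfl⟩ y ⟨s', t', hs1', hs2', ht1', ht2', rfl⟩ a b ha hb hab
    refine ⟨a*s + b*s', a*t + b*t', ?_, ?_, ?_, ?_, ?_⟩
    · have h1 : a*s₀ ≤ a*s := mul_le_mul_of_nonneg_left hs1 ha
      have h2 : b*s₀ ≤ b*s' := mul_le_mul_of_nonneg_left hs1' hb
      have h3 : a*s₀ + b*s₀ = s₀ := by rw [← add_mul, hab, one_mul]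
      linarith
    · have h1 : a*s ≤ a*s₁ := mul_le_mul_of_nonneg_left hs2 ha
      have h2 : b*s' ≤ b*s₁ := mul_le_mul_of_nonneg_left hs2' hb
      have h3 : a*s₁ + b*s₁ = s₁ := by rw [← add_mul, hab, one_mul]
      linarith
    · have h1 : a*t₀ ≤ a*t := mul_le_mul_of_nonneg_left ht1 ha
      have h2 : b*t₀ ≤ b*t' := mul_le_mul_of_nonneg_left ht1' hb
      have h3 : a*t₀ + b*t₀ = t₀ := by rw [← add_mul, hab, one_mul]
      linarith
    · have h1 : a*t ≤ a*t₁ := mul_le_mul_of_nonneg_left ht2 ha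
      have h2 : b*t' ≤ b*t₁ := mul_le_mul_of_nonneg_left ht2' hb
      have h3 : a*t₁ + b*t₁ = t₁ := by rw [← add_mul, hab, one_mul]
      linarith
    · have hexp : a • (A + s • v + t • w) + b • (A + s' • v + t' • w)
          = (a+b) • A + (a*s + b*s') • v + (a*t + b*t') • w := by
        simp only [smul_add, smul_smul, add_smul]
        abel
      rw [hexp, hab, one_smul]
  have hsub : ({P₁, P₂, P₃, P₄} : Set (EuclideanSpace ℝ (Fin 2))) ⊆ R := by
    rintro x (rfl | rfl | rfl | rfl)
    · exact ⟨s₀, t₀, le_refl _, le_of_lt hs01, le_refl _, le_of_lt ht01, hP₁_def⟩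
    · exact ⟨s₁, t₀, le_of_lt hs01, le_refl _, le_refl _, le_of_lt ht01, hP₂_def⟩
    · exact ⟨s₀, t₁, le_refl _, le_of_lt hs01, le_of_lt ht01, le_refl _, hP₃_def⟩
    · exact ⟨s₁, t₁, le_of_lt hs01, le_refl _, le_of_lt ht01, le_refl _, hP₄_def⟩
  have hhull : convexHull ℝ ({P₁, P₂, P₃, P₄} : Set (EuclideanSpace ℝ (Fin 2))) ⊆ S :=
    (convexHull_min hsub hRconv).trans hRS
  have h21 : P₂ - P₁ = (s₁ - s₀) • v := by rw [hP₂_def, hP₁_def, sub_smul]; abel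
  have h31 : P₃ - P₁ = (t₁ - t₀) • w := by rw [hP₃_def, hP₁_def, sub_smul]; abel
  -- the four points are not collinear
  have hncol4 : ¬ Collinear ℝ ({P₁, P₂, P₃, P₄} : Set (EuclideanSpace ℝ (Fin 2))) := by
    intro hcol
    have hcol3 : Collinear ℝ ({P₁, P₂, P₃} : Set (EuclideanSpace ℝ (Fin 2))) := by
      apply hcol.subset
      intro x hx
      rcases hx with rfl | rfl | rfl <;> simp
    obtain ⟨d, hd⟩ := (collinear_iff_of_mem
      (show P₁ ∈ ({P₁, P₂, P₃} : Set (EuclideanSpace ℝ (Fin 2))) by simp)).mp hcol3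
    obtain ⟨r₁, hr₁⟩ := hd P₂ (by simp)
    obtain ⟨r₂, hr₂⟩ := hd P₃ (by simp)
    rw [vadd_eq_add] at hr₁ hr₂
    have h1 : r₁ • d = (s₁ - s₀) • v := by rw [← h21, hr₁]; abel
    have h2 : r₂ • d = (t₁ - t₀) • w := by rw [← h31, hr₂]; abel
    have hr₁ne : r₁ ≠ 0 := by
      intro h0
      rw [h0, zero_smul] at h1
      rcases smul_eq_zero.mp h1.symm with h | h
      · linarith [sub_eq_zero.mp h]
      · exact hv h
    have hdval : d = (r₁⁻¹ * (s₁ - s₀)) • v := by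
      rw [mul_smul, ← h1, smul_smul, inv_mul_cancel₀ hr₁ne, one_smul]
    rw [hdval, smul_smul] at h2
    have := (hindep _ _ h2).2
    linarith [sub_eq_zero.mp this]
  -- nonempty interior
  have hspan : affineSpan ℝ ({P₁, P₂, P₃, P₄} : Set (EuclideanSpace ℝ (Fin 2))) = ⊤ := by
    rw [AffineSubspace.affineSpan_eq_top_iff_vectorSpan_eq_top_of_nonempty ℝ _ _ (by simp : Set.Nonempty _)]
    have hli : LinearIndependent ℝ ![v, w] := by
      rw [linearIndependent_fin2]
      refine ⟨hw, fun a ha => ?_⟩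
      exact one_ne_zero (hindep 1 a (by rw [one_smul]; exact ha.symm)).1
    have hspan2 : Submodule.span ℝ ({v, w} : Set (EuclideanSpace ℝ (Fin 2))) = ⊤ := by
      have h := hli.span_eq_top_of_card_eq_finrank (by simp)
      rwa [show Set.range ![v, w] = {v, w} from by
        simp [Matrix.range_cons, Matrix.range_empty, Set.pair_comm]] at h
    have hvwsub : ({v, w} : Set (EuclideanSpace ℝ (Fin 2))) ⊆
        (vectorSpan ℝ ({P₁, P₂, P₃, P₄} : Set (EuclideanSpace ℝ (Fin 2))) : Set _) := by
      rintro x (rfl | rfl)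
      · have hmem21 : P₂ -ᵥ P₁ ∈ vectorSpan ℝ ({P₁, P₂, P₃, P₄} : Set (EuclideanSpace ℝ (Fin 2))) :=
          vsub_mem_vectorSpan ℝ (by simp) (by simp)
        rw [vsub_eq_sub, h21] at hmem21
        have := Submodule.smul_mem _ (s₁ - s₀)⁻¹ hmem21
        rwa [smul_smul, inv_mul_cancel₀ (by linarith : s₁ - s₀ ≠ 0), one_smul] at this
      · have hmem31 : P₃ -ᵥ P₁ ∈ vectorSpan ℝ ({P₁, P₂, P₃, P₄} : Set (EuclideanSpace ℝ (Fin 2))) :=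
          vsub_mem_vectorSpan ℝ (by simp) (by simp)
        rw [vsub_eq_sub, h31] at hmem31
        have := Submodule.smul_mem _ (t₁ - t₀)⁻¹ hmem31
        rwa [smul_smul, inv_mul_cancel₀ (by linarith : t₁ - t₀ ≠ 0), one_smul] at this
    rw [eq_top_iff, ← hspan2]
    exact Submodule.span_le.mpr hvwsub
  have hint : (interior (convexHull ℝ ({P₁, P₂, P₃, P₄} :
      Set (EuclideanSpace ℝ (Fin 2))))).Nonempty := by
    rw [(convex_convexHull ℝ _).interior_nonempty_iff_affineSpan_eq_top, affineSpan_convexHull]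
    exact hspan
  exact ⟨P₁, P₂, P₃, P₄, hncol4, hint, hhull⟩
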